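/- arXiv:1308.5728 — 6 statements merged into one kernel-verified Lean document; each statement's English description precedes it below -/
import Mathlib

section
/- Let n, m be positive integers and let F_a ∈ ℂ^{n×n}, G_a ∈ ℂ^{n×m}, H_a ∈ ℂ^{m×n}. Suppose there exists a Hermitian positive definite matrix Θ ∈ ℂ^{n×n} such that F_aΘ + ΘF_a† + G_aG_a† = 0 and G_a = −ΘH_a†. Let L ∈ ℂ^{q×m} be any matrix such that LL† is invertible. Then Q := Θ is a positive semidefinite solution of the Kalman filter Riccati equation F_aQ + QF_a† + G_aG_a† − (G_a + QH_a†)L†(LL†)^{−1}(G_a + QH_a†)† = 0, and the corresponding Kalman gain K_g := (G_a + QH_a†)L†(LL†)^{−1} equals the zero matrix. (Consequently the Kalman filter dynamics for a physically realizable annihilation-operator quantum system are independent of the measured output; this is the core of Theorem 5 and Corollary 1 of the paper.) -/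
open Matrix ComplexOrder

/-- For a physically realizable annihilation-operator quantum system
(conditions `F_aΘ + ΘF_a† + G_aG_a† = 0` and `G_a = −ΘH_a†` with `Θ` Hermitian positive
definite), the matrix `Q := Θ` is a positive semidefinite solution of the Kalman filter
Riccati equation, and the corresponding Kalman gain
`K_g = (G_a + QH_a†)L†(LL†)⁻¹` is zero. -/
theorem kalman_gain_zero_of_physically_realizable
    (n m q : ℕ) (hn : 0 < n) (hm : 0 < m)
    (Fa : Matrix (Fin n) (Fin n) ℂ)
    (Ga : Matrix (Fin n) (Fin m) ℂ)
    (Ha : Matrix (Fin m) (Fin n) ℂ)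
    (Θ : Matrix (Fin n) (Fin n) ℂ)
    (hΘ : Θ.PosDef)
    (hRic : Fa * Θ + Θ * Faᴴ + Ga * Gaᴴ = 0)
    (hG : Ga = -(Θ * Haᴴ))
    (L : Matrix (Fin q) (Fin m) ℂ)
    (hL : IsUnit (L * Lᴴ)) :
    Θ.PosSemidef ∧
    Fa * Θ + Θ * Faᴴ + Ga * Gaᴴ -
      ((Ga + Θ * Haᴴ) * Lᴴ) * (L * Lᴴ)⁻¹ * ((Ga + Θ * Haᴴ) * Lᴴ)ᴴ = 0 ∧
    (Ga + Θ * Haᴴ) * Lᴴ * (L * Lᴴ)⁻¹ = 0 := by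
  have h0 : Ga + Θ * Haᴴ = 0 := by rw [hG]; simp
  refine ⟨hΘ.posSemidef, ?_, ?_⟩ <;> simp [h0, hRic]
end

section
/- Let F ∈ ℂ^{n×n}, G_w ∈ ℂ^{n×m_w}, G_u ∈ ℂ^{n×m_u}, H ∈ ℂ^{m_w×n}, H̃ ∈ ℂ^{m_u×n}, and suppose there exists a Hermitian positive definite Θ_p ∈ ℂ^{n×n} with FΘ_p + Θ_pF† + G_wG_w† + G_uG_u† = 0, G_w = −Θ_pH†, and G_u = −Θ_pH̃† (a physically realizable plant). Let F_c ∈ ℂ^{n_c×n_c}, G_cw ∈ ℂ^{n_c×m_u}, G_cy ∈ ℂ^{n_c×m_w}, H_c ∈ ℂ^{m_u×n_c}, H̃_c ∈ ℂ^{m_w×n_c}, and suppose there exists a Hermitian positive definite Θ_c ∈ ℂ^{n_c×n_c} with F_cΘ_c + Θ_cF_c† + G_cwG_cw† + G_cyG_cy† = 0, G_cw = −Θ_cH_c†, and G_cy = −Θ_cH̃_c† (a physically realizable coherent controller). Define the closed-loop matrices F_cl = [[F, G_uH_c],[G_cyH, F_c]], G_cl = [[G_w, G_u],[G_cy, G_cw]],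 H_cl = [[H, H̃_c],[H̃, H_c]]. Then the block diagonal matrix Θ_cl = diag(Θ_p, Θ_c) is Hermitian positive definite and satisfies F_clΘ_cl + Θ_clF_cl† + G_clG_cl† = 0 and G_cl = −Θ_clH_cl†; that is, the closed-loop system (F_cl, G_cl, H_cl, I) is physically realizable. -/
open Matrix ComplexOrder

lemma posDef_fromBlocks_diag {m n : Type*} [Fintype m] [Fintype n] [DecidableEq m] [DecidableEq n]
    {A : Matrix m m ℂ} {D : Matrix n n ℂ} (hA : A.PosDef) (hD : D.PosDef) :
    (Matrix.fromBlocks A 0 0 D).PosDef := by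
  rw [posDef_iff_dotProduct_mulVec]
  constructor
  · rw [Matrix.IsHermitian, fromBlocks_conjTranspose]; simp; exact ⟨hA.1, hD.1⟩
  · intro x hx
    have hsplit : star x ⬝ᵥ (fromBlocks A 0 0 D) *ᵥ x =
        star (x ∘ Sum.inl) ⬝ᵥ A *ᵥ (x ∘ Sum.inl) + star (x ∘ Sum.inr) ⬝ᵥ D *ᵥ (x ∘ Sum.inr) := by
      simp [fromBlocks_mulVec, dotProduct, Fintype.sum_sum_type]
    rw [hsplit]
    rcases Classical.em (x ∘ Sum.inl = 0) with h1 | h1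
    · have h2 : x ∘ Sum.inr ≠ 0 := by
        intro h2
        apply hx
        funext i
        cases i with
        | inl i => exact congrFun h1 i
        | inr i => exact congrFun h2 i
      have : star (x ∘ Sum.inl) ⬝ᵥ A *ᵥ (x ∘ Sum.inl) = 0 := by
        rw [h1]; simp
      rw [this, zero_add]
      exact (posDef_iff_dotProduct_mulVec.mp hD).2 h2
    · exact add_pos_of_pos_of_nonneg ((posDef_iff_dotProduct_mulVec.mp hA).2 h1) ((posSemidef_iff_dotProduct_mulVec.mp hD.posSemidef).2 _)

/-- The interconnection of a physically realizable annihilation-operator plant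
with a physically realizable coherent controller is again physically realizable, with
commutation matrix `Θ_cl = diag(Θ_p, Θ_c)`. -/
theorem closed_loop_physically_realizable
    (n nc mw mu : ℕ)
    (F : Matrix (Fin n) (Fin n) ℂ)
    (Gw : Matrix (Fin n) (Fin mw) ℂ)
    (Gu : Matrix (Fin n) (Fin mu) ℂ)
    (H : Matrix (Fin mw) (Fin n) ℂ)
    (Ht : Matrix (Fin mu) (Fin n) ℂ)
    (Θp : Matrix (Fin n) (Fin n) ℂ)
    (hΘp : Θp.PosDef)
    (hpRic : F * Θp + Θp * Fᴴ + Gw * Gwᴴ + Gu * Guᴴ = 0)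
    (hGw : Gw = -(Θp * Hᴴ))
    (hGu : Gu = -(Θp * Htᴴ))
    (Fc : Matrix (Fin nc) (Fin nc) ℂ)
    (Gcw : Matrix (Fin nc) (Fin mu) ℂ)
    (Gcy : Matrix (Fin nc) (Fin mw) ℂ)
    (Hc : Matrix (Fin mu) (Fin nc) ℂ)
    (Htc : Matrix (Fin mw) (Fin nc) ℂ)
    (Θc : Matrix (Fin nc) (Fin nc) ℂ)
    (hΘc : Θc.PosDef)
    (hcRic : Fc * Θc + Θc * Fcᴴ + Gcw * Gcwᴴ + Gcy * Gcyᴴ = 0)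
    (hGcw : Gcw = -(Θc * Hcᴴ))
    (hGcy : Gcy = -(Θc * Htcᴴ)) :
    (fromBlocks Θp 0 0 Θc).PosDef ∧
    (fromBlocks F (Gu * Hc) (Gcy * H) Fc) * (fromBlocks Θp 0 0 Θc) +
      (fromBlocks Θp 0 0 Θc) * (fromBlocks F (Gu * Hc) (Gcy * H) Fc)ᴴ +
      (fromBlocks Gw Gu Gcy Gcw) * (fromBlocks Gw Gu Gcy Gcw)ᴴ = 0 ∧
    (fromBlocks Gw Gu Gcy Gcw) =
      -((fromBlocks Θp 0 0 Θc) * (fromBlocks H Htc Ht Hc)ᴴ) := by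
  refine ⟨posDef_fromBlocks_diag hΘp hΘc, ?_, ?_⟩
  · rw [fromBlocks_conjTranspose, fromBlocks_conjTranspose,
      fromBlocks_multiply, fromBlocks_multiply, fromBlocks_multiply,
      fromBlocks_add, fromBlocks_add, ← fromBlocks_zero]
    rw [fromBlocks_inj]
    refine ⟨?_, ?_, ?_, ?_⟩
    · simp only [Matrix.mul_zero, Matrix.zero_mul, add_zero, zero_add]
      rw [← hpRic]; abel
    · simp only [Matrix.mul_zero, Matrix.zero_mul, add_zero, zero_add]
      rw [hGw, hGcw, hGcy]
      simp only [conjTranspose_mul, conjTranspose_neg, conjTranspose_conjTranspose, Matrix.neg_mul, Matrix.mul_neg,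
        hΘc.1.eq, hΘp.1.eq, Matrix.mul_assoc]
      abel
    · simp only [Matrix.mul_zero, Matrix.zero_mul, add_zero, zero_add]
      rw [hGw, hGcw, hGcy]
      simp only [conjTranspose_mul, conjTranspose_neg, conjTranspose_conjTranspose, Matrix.neg_mul, Matrix.mul_neg,
        hΘc.1.eq, hΘp.1.eq, Matrix.mul_assoc]
      abel
    · simp only [Matrix.mul_zero, Matrix.zero_mul, add_zero, zero_add]
      rw [← hcRic]; abel
  · rw [fromBlocks_conjTranspose, fromBlocks_multiply]
    simp only [Matrix.zero_mul, add_zero, zero_add]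
    rw [show -fromBlocks (Θp * Hᴴ) (Θp * Htᴴ) (Θc * Htcᴴ) (Θc * Hcᴴ)
        = fromBlocks (-(Θp * Hᴴ)) (-(Θp * Htᴴ)) (-(Θc * Htcᴴ)) (-(Θc * Hcᴴ)) from
      fromBlocks_neg _ _ _ _, fromBlocks_inj]
    exact ⟨hGw, hGu, hGcy, hGcw⟩
end

section
/- Let F ∈ ℂ^{n×n}, G ∈ ℂ^{n×m}, H ∈ ℂ^{m×n}, and suppose there exists a Hermitian positive definite matrix Θ ∈ ℂ^{n×n} such that FΘ + ΘF† + GG† = 0 and G = −ΘH†. Define Γ(s) := H(sI − F)^{−1}G + I. Let L ∈ ℂ^{q×m} satisfy LL† = I. Then for every ω ∈ ℝ such that iωI − F is invertible, the matrix Γ_Z(iω) := LΓ(iω) satisfies Γ_Z(iω)Γ_Z(iω)† = I. (This establishes that the trivial controller dU = dW̃ applied to a physically realizable annihilation-operator plant with a physical cost output gives a closed-loop transfer function of H^∞ norm equal to 1.) -/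
open Matrix ComplexOrder

/-- For a physically realizable annihilation-operator plant
(`FΘ + ΘF† + GG† = 0`, `G = −ΘH†` with `Θ` Hermitian positive definite), the cost transfer
function `Γ_Z(iω) = L(H(iωI − F)⁻¹G + I)` with `LL† = I` satisfies
`Γ_Z(iω)Γ_Z(iω)† = I` at every frequency `ω` where it is defined. -/
theorem trivial_controller_allpass
    (n m q : ℕ)
    (F : Matrix (Fin n) (Fin n) ℂ)
    (G : Matrix (Fin n) (Fin m) ℂ)
    (H : Matrix (Fin m) (Fin n) ℂ)
    (Θ : Matrix (Fin n) (Fin n) ℂ)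
    (hΘ : Θ.PosDef)
    (hRic : F * Θ + Θ * Fᴴ + G * Gᴴ = 0)
    (hG : G = -(Θ * Hᴴ))
    (L : Matrix (Fin q) (Fin m) ℂ)
    (hL : L * Lᴴ = 1) :
    ∀ ω : ℝ, IsUnit ((Complex.I * (ω : ℂ)) • (1 : Matrix (Fin n) (Fin n) ℂ) - F) →
      (L * (H * ((Complex.I * (ω : ℂ)) • (1 : Matrix (Fin n) (Fin n) ℂ) - F)⁻¹ * G + 1)) *
      (L * (H * ((Complex.I * (ω : ℂ)) • (1 : Matrix (Fin n) (Fin n) ℂ) - F)⁻¹ * G + 1))ᴴ = 1 := by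
  intro ω hA
  set s : ℂ := Complex.I * (ω : ℂ) with hs
  set A : Matrix (Fin n) (Fin n) ℂ := s • (1 : Matrix (Fin n) (Fin n) ℂ) - F with hAdef
  have hd : IsUnit A.det := (Matrix.isUnit_iff_isUnit_det A).mp hA
  have hBA : A⁻¹ * A = 1 := Matrix.nonsing_inv_mul A hd
  set B : Matrix (Fin n) (Fin n) ℂ := A⁻¹ with hBdef
  have hstar : star s = -s := by
    simp [hs, Complex.star_def, _root_.map_mul, Complex.conj_I, Complex.conj_ofReal]
  have hAH : Aᴴ = (-s) • (1 : Matrix (Fin n) (Fin n) ℂ) - Fᴴ := by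
    rw [hAdef, Matrix.conjTranspose_sub, Matrix.conjTranspose_smul,
      Matrix.conjTranspose_one, hstar]
  have hBHA : Aᴴ * Bᴴ = 1 := by
    rw [hBdef, ← Matrix.conjTranspose_mul, hBA, Matrix.conjTranspose_one]
  have hGG : G * Gᴴ = -(F * Θ + Θ * Fᴴ) := eq_neg_of_add_eq_zero_right hRic
  have key : A * Θ + Θ * Aᴴ = G * Gᴴ := by
    rw [hAH, hGG, hAdef, Matrix.sub_mul, Matrix.mul_sub, Matrix.smul_mul,
      Matrix.mul_smul, one_mul, mul_one, neg_smul]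
    abel
  have hΘH : Θ * Hᴴ = -G := by rw [hG, neg_neg]
  have hHΘ : H * Θ = -Gᴴ := by
    have h2 := congrArg Matrix.conjTranspose hG
    rw [Matrix.conjTranspose_neg, Matrix.conjTranspose_mul,
      Matrix.conjTranspose_conjTranspose, hΘ.1.eq] at h2
    rw [h2, neg_neg]
  have e1 : B * (G * Gᴴ) * Bᴴ = Θ * Bᴴ + B * Θ := by
    rw [← key, Matrix.mul_add, Matrix.add_mul, ← Matrix.mul_assoc B A Θ, hBA, one_mul,
      Matrix.mul_assoc B (Θ * Aᴴ) Bᴴ, Matrix.mul_assoc Θ Aᴴ Bᴴ, hBHA, mul_one]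
  have e2 : H * (Θ * Bᴴ + B * Θ) * Hᴴ = -(Gᴴ * (Bᴴ * Hᴴ)) - H * B * G := by
    rw [Matrix.mul_add, Matrix.add_mul, ← Matrix.mul_assoc H Θ Bᴴ, hHΘ,
      ← Matrix.mul_assoc H B Θ, Matrix.mul_assoc (H * B) Θ Hᴴ, hΘH, Matrix.neg_mul,
      Matrix.neg_mul, Matrix.mul_neg, Matrix.mul_assoc Gᴴ Bᴴ Hᴴ, sub_eq_add_neg]
  have hX : (H * B * G + 1) * (H * B * G + 1)ᴴ = 1 := by
    have hCT : (H * B * G + 1)ᴴ = Gᴴ * (Bᴴ * Hᴴ) + 1 := by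
      rw [Matrix.conjTranspose_add, Matrix.conjTranspose_one, Matrix.conjTranspose_mul,
        Matrix.conjTranspose_mul]
    rw [hCT, Matrix.add_mul, Matrix.mul_add, Matrix.mul_add, Matrix.one_mul, Matrix.mul_one]
    have t1 : H * B * G * (Gᴴ * (Bᴴ * Hᴴ)) = H * (B * (G * Gᴴ) * Bᴴ) * Hᴴ := by
      simp only [Matrix.mul_assoc]
    rw [t1, e1, e2]
    simp only [Matrix.one_mul, Matrix.mul_one]
    abel
  calc (L * (H * B * G + 1)) * (L * (H * B * G + 1))ᴴ
      = L * ((H * B * G + 1) * (H * B * G + 1)ᴴ) * Lᴴ := by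
        rw [Matrix.conjTranspose_mul, ← Matrix.mul_assoc, Matrix.mul_assoc L]
    _ = 1 := by rw [hX, Matrix.mul_one, hL]
end

section
/- Let n, m be positive integers and let F = Δ(F₁,F₂) ∈ ℂ^{2n×2n}, G = Δ(G₁,G₂) ∈ ℂ^{2n×2m}, H = Δ(H₁,H₂) ∈ ℂ^{2m×2n}, K = Δ(K₁,K₂) ∈ ℂ^{2m×2m}. Then the following are equivalent: (i) there exist an invertible matrix T = Δ(T₁,T₂) ∈ ℂ^{2n×2n}, a Hermitian matrix M = Δ(M₁,M₂) ∈ ℂ^{2n×2n}, and a matrix N = Δ(N₁,N₂) ∈ ℂ^{2m×2n} such that, setting Θ := T J_n T†, one has F = −iΘM − (1/2)ΘN†J_mN, G = −ΘN†J_m, H = N, and K = I; (ii) there exists a Hermitian matrix Θ ∈ ℂ^{2n×2n} of the form Θ = T J_n T† with T = Δ(T₁,T₂) invertible, such that FΘ + ΘF† + GJ_mG† = 0, G = −ΘH†J_m, and K = I. (Theorem 1 of the paper.) -/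
open Matrix

/-- `Δ(A,B) = [[A, B],[conj B, conj A]]` where `conj` is entrywise complex conjugation. -/
def deltaM {n m : ℕ} (A B : Matrix (Fin n) (Fin m) ℂ) :
    Matrix (Fin n ⊕ Fin n) (Fin m ⊕ Fin m) ℂ :=
  fromBlocks A B (B.map (starRingEnd ℂ)) (A.map (starRingEnd ℂ))

/-- `J_k = [[I, 0],[0, −I]]`. -/
def Jmat (k : ℕ) : Matrix (Fin k ⊕ Fin k) (Fin k ⊕ Fin k) ℂ :=
  fromBlocks 1 0 0 (-1)

/-- The "swap-conjugation" operation: `Δ`-form matrices are its fixed points. -/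
def sconj {p q : ℕ} (X : Matrix (Fin p ⊕ Fin p) (Fin q ⊕ Fin q) ℂ) :
    Matrix (Fin p ⊕ Fin p) (Fin q ⊕ Fin q) ℂ :=
  (X.map (starRingEnd ℂ)).submatrix (Equiv.sumComm (Fin p) (Fin p)) (Equiv.sumComm (Fin q) (Fin q))

lemma sconj_apply {p q : ℕ} (X : Matrix (Fin p ⊕ Fin p) (Fin q ⊕ Fin q) ℂ)
    (i : Fin p ⊕ Fin p) (j : Fin q ⊕ Fin q) :
    sconj X i j = (starRingEnd ℂ) (X (Sum.swap i) (Sum.swap j)) := rfl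

lemma sconj_mul {p q r : ℕ} (X : Matrix (Fin p ⊕ Fin p) (Fin q ⊕ Fin q) ℂ)
    (Y : Matrix (Fin q ⊕ Fin q) (Fin r ⊕ Fin r) ℂ) :
    sconj (X * Y) = sconj X * sconj Y := by
  unfold sconj
  rw [submatrix_mul_equiv, Matrix.map_mul]

lemma sconj_deltaM {p q : ℕ} (A B : Matrix (Fin p) (Fin q) ℂ) :
    sconj (deltaM A B) = deltaM A B := by
  ext (i | i) (j | j) <;>
    simp [sconj_apply, deltaM, fromBlocks, Matrix.map_apply]

lemma exists_deltaM_of_sconj {p q : ℕ} (X : Matrix (Fin p ⊕ Fin p) (Fin q ⊕ Fin q) ℂ)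
    (h : sconj X = X) : ∃ A B, X = deltaM A B := by
  refine ⟨fun i j => X (.inl i) (.inl j), fun i j => X (.inl i) (.inr j), ?_⟩
  ext (i | i) (j | j)
  · rfl
  · rfl
  · have := congrFun (congrFun h (.inr i)) (.inl j)
    simp only [sconj_apply, Sum.swap_inr, Sum.swap_inl] at this
    simp [deltaM, fromBlocks, Matrix.map_apply, ← this]
    rfl
  · have := congrFun (congrFun h (.inr i)) (.inr j)
    simp only [sconj_apply, Sum.swap_inr, Sum.swap_inl] at this
    simp [deltaM, fromBlocks, Matrix.map_apply, ← this]
    rfl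

lemma sconj_Jmat (k : ℕ) : sconj (Jmat k) = -(Jmat k) := by
  ext (i | i) (j | j) <;>
    simp [sconj_apply, Jmat, fromBlocks, Matrix.one_apply, apply_ite]

lemma sconj_conjTranspose {p q : ℕ} (X : Matrix (Fin p ⊕ Fin p) (Fin q ⊕ Fin q) ℂ) :
    sconj Xᴴ = (sconj X)ᴴ := by
  ext i j
  simp [sconj_apply, conjTranspose_apply]

lemma sconj_smul {p q : ℕ} (c : ℂ) (X : Matrix (Fin p ⊕ Fin p) (Fin q ⊕ Fin q) ℂ) :
    sconj (c • X) = (starRingEnd ℂ c) • sconj X := by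
  ext i j
  simp [sconj_apply]

lemma sconj_sub {p q : ℕ} (X Y : Matrix (Fin p ⊕ Fin p) (Fin q ⊕ Fin q) ℂ) :
    sconj (X - Y) = sconj X - sconj Y := by
  ext i j
  simp [sconj_apply]

lemma sconj_one {p : ℕ} : sconj (1 : Matrix (Fin p ⊕ Fin p) (Fin p ⊕ Fin p) ℂ) = 1 := by
  ext i j
  rcases eq_or_ne i j with h | h
  · simp [sconj_apply, Matrix.one_apply, h]
  · have h2 : Sum.swap i ≠ Sum.swap j := fun hc => h (by simpa using congrArg Sum.swap hc)
    simp [sconj_apply, Matrix.one_apply, h, h2]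

lemma Jmat_hermitian (k : ℕ) : (Jmat k)ᴴ = Jmat k := by
  simp [Jmat, fromBlocks_conjTranspose]

lemma Jmat_mul_Jmat (k : ℕ) : Jmat k * Jmat k = 1 := by
  simp [Jmat, fromBlocks_multiply, ← fromBlocks_one]

lemma isUnit_Jmat (k : ℕ) : IsUnit (Jmat k) :=
  ⟨⟨Jmat k, Jmat k, Jmat_mul_Jmat k, Jmat_mul_Jmat k⟩, rfl⟩

/-- Theorem 1 of the paper: the linear quantum system
`(F, G, H, K)` with all matrices of the form `Δ(·,·)` is physically realizable
(i.e. `F = −iΘM − (1/2)ΘN†J_mN`, `G = −ΘN†J_m`, `H = N`, `K = I` for some `Θ = TJ_nT†`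
with `T = Δ(T₁,T₂)` invertible, `M = Δ(M₁,M₂)` Hermitian, and `N = Δ(N₁,N₂)`)
if and only if there exists a Hermitian `Θ = TJ_nT†` (with `T = Δ(T₁,T₂)` invertible)
such that `FΘ + ΘF† + GJ_mG† = 0`, `G = −ΘH†J_m`, and `K = I`. -/
theorem physical_realizability_iff_riccati
    (n m : ℕ) (hn : 0 < n) (hm : 0 < m)
    (F₁ F₂ : Matrix (Fin n) (Fin n) ℂ)
    (G₁ G₂ : Matrix (Fin n) (Fin m) ℂ)
    (H₁ H₂ : Matrix (Fin m) (Fin n) ℂ)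
    (K₁ K₂ : Matrix (Fin m) (Fin m) ℂ) :
    (∃ (T₁ T₂ M₁ M₂ : Matrix (Fin n) (Fin n) ℂ)
        (N₁ N₂ : Matrix (Fin m) (Fin n) ℂ)
        (Θ : Matrix (Fin n ⊕ Fin n) (Fin n ⊕ Fin n) ℂ),
        IsUnit (deltaM T₁ T₂) ∧ (deltaM M₁ M₂).IsHermitian ∧
        Θ = deltaM T₁ T₂ * Jmat n * (deltaM T₁ T₂)ᴴ ∧
        deltaM F₁ F₂ =
          (-Complex.I) • (Θ * deltaM M₁ M₂) -
            (1 / 2 : ℂ) • (Θ * (deltaM N₁ N₂)ᴴ * Jmat m * deltaM N₁ N₂) ∧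
        deltaM G₁ G₂ = -(Θ * (deltaM N₁ N₂)ᴴ * Jmat m) ∧
        deltaM H₁ H₂ = deltaM N₁ N₂ ∧
        deltaM K₁ K₂ = 1) ↔
    (∃ (Θ : Matrix (Fin n ⊕ Fin n) (Fin n ⊕ Fin n) ℂ),
        Θ.IsHermitian ∧
        (∃ T₁ T₂ : Matrix (Fin n) (Fin n) ℂ,
          IsUnit (deltaM T₁ T₂) ∧ Θ = deltaM T₁ T₂ * Jmat n * (deltaM T₁ T₂)ᴴ) ∧
        deltaM F₁ F₂ * Θ + Θ * (deltaM F₁ F₂)ᴴ +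
          deltaM G₁ G₂ * Jmat m * (deltaM G₁ G₂)ᴴ = 0 ∧
        deltaM G₁ G₂ = -(Θ * (deltaM H₁ H₂)ᴴ * Jmat m) ∧
        deltaM K₁ K₂ = 1) := by
  constructor
  · rintro ⟨T₁, T₂, M₁, M₂, N₁, N₂, Θ, hT, hM, hΘ, hF, hG, hH, hK⟩
    set F := deltaM F₁ F₂
    set G := deltaM G₁ G₂
    set M := deltaM M₁ M₂
    set N := deltaM N₁ N₂
    have hΘH : Θᴴ = Θ := by
      rw [hΘ]
      simp [conjTranspose_mul, Jmat_hermitian, Matrix.mul_assoc]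
    refine ⟨Θ, hΘH, ⟨T₁, T₂, hT, hΘ⟩, ?_, ?_, hK⟩
    · have hFH : Fᴴ = Complex.I • (M * Θ) - (1/2 : ℂ) • (Nᴴ * Jmat m * N * Θ) := by
        rw [hF]
        simp [conjTranspose_mul, hΘH, hM.eq, Jmat_hermitian, Matrix.mul_assoc, sub_eq_add_neg]
      have hGJ : G * Jmat m * Gᴴ = Θ * Nᴴ * Jmat m * N * Θ := by
        rw [hG]
        simp only [conjTranspose_neg, conjTranspose_mul, Jmat_hermitian, conjTranspose_conjTranspose,
          hΘH, Matrix.neg_mul, Matrix.mul_neg, neg_neg]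
        calc Θ * Nᴴ * Jmat m * Jmat m * (Jmat m * (N * Θ))
            = Θ * Nᴴ * (Jmat m * Jmat m) * Jmat m * (N * Θ) := by
              simp only [Matrix.mul_assoc]
          _ = Θ * Nᴴ * Jmat m * N * Θ := by
              rw [Jmat_mul_Jmat]
              simp only [Matrix.mul_one, Matrix.mul_assoc]
    -- expand everything
      rw [hGJ, hFH, hF]
      simp only [Matrix.sub_mul, Matrix.mul_sub, Matrix.smul_mul, Matrix.mul_smul,
        smul_smul, Matrix.mul_assoc]
      module
    · rw [hG, hH]
  · rintro ⟨Θ, hΘherm, ⟨T₁, T₂, hT, hΘ⟩, hricc, hG, hK⟩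
    set F := deltaM F₁ F₂ with hFdef
    set G := deltaM G₁ G₂ with hGdef
    set H := deltaM H₁ H₂ with hHdef
    set T := deltaM T₁ T₂ with hTdef
    have hTH : IsUnit Tᴴ := by
      rw [Matrix.isUnit_iff_isUnit_det] at hT ⊢
      rwa [Matrix.det_conjTranspose, isUnit_star]
    have hΘunit : IsUnit Θ := by
      rw [hΘ]
      exact (hT.mul (isUnit_Jmat n)).mul hTH
    have hΘdet : IsUnit Θ.det := (Matrix.isUnit_iff_isUnit_det Θ).mp hΘunit
    have hΘinv : Θ * Θ⁻¹ = 1 := Matrix.mul_nonsing_inv Θ hΘdet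
    have hΘinv' : Θ⁻¹ * Θ = 1 := Matrix.nonsing_inv_mul Θ hΘdet
    have hΘHG : Θ * Hᴴ = -(G * Jmat m) := by
      rw [hG]
      simp only [Matrix.neg_mul, neg_neg, Matrix.mul_assoc, Jmat_mul_Jmat, Matrix.mul_one]
    have hHΘ : H * Θ = -(Jmat m * Gᴴ) := by
      have h2 := congrArg conjTranspose hΘHG
      simpa [conjTranspose_mul, hΘherm.eq, Jmat_hermitian] using h2
    set M : Matrix (Fin n ⊕ Fin n) (Fin n ⊕ Fin n) ℂ :=
      Complex.I • (Θ⁻¹ * (F - (1/2 : ℂ) • (G * H))) with hMdef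
    have hΘM : Θ * M = Complex.I • (F - (1/2 : ℂ) • (G * H)) := by
      rw [hMdef, Matrix.mul_smul, ← Matrix.mul_assoc, hΘinv, Matrix.one_mul]
    -- F equation
    have h3 : Θ * Hᴴ * Jmat m * H = -(G * H) := by
      rw [hΘHG]
      simp only [Matrix.neg_mul, Matrix.mul_assoc, Jmat_mul_Jmat, Matrix.mul_one]
    have hFeq : F = (-Complex.I) • (Θ * M) - (1/2 : ℂ) • (Θ * Hᴴ * Jmat m * H) := by
      rw [hΘM, h3, smul_smul]
      simp only [neg_mul, Complex.I_mul_I, neg_neg, one_smul, smul_neg, sub_neg_eq_add]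
      module
    -- M is Hermitian
    have hΘinvH : Θ⁻¹ᴴ = Θ⁻¹ := by
      rw [Matrix.conjTranspose_nonsing_inv, hΘherm.eq]
    have hMherm : M.IsHermitian := by
      have hMH : Mᴴ = (-Complex.I) • ((Fᴴ - (1/2 : ℂ) • (Hᴴ * Gᴴ)) * Θ⁻¹) := by
        rw [hMdef]
        simp [conjTranspose_mul, hΘinvH, Complex.star_def, Complex.conj_I, map_div₀]
      have lhs : Θ * Mᴴ * Θ = (-Complex.I) • (Θ * Fᴴ - (1/2 : ℂ) • (Θ * (Hᴴ * Gᴴ))) := by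
        rw [hMH]
        have e1 : Θ * ((-Complex.I) • ((Fᴴ - (1/2 : ℂ) • (Hᴴ * Gᴴ)) * Θ⁻¹)) * Θ
            = (-Complex.I) • (Θ * (Fᴴ - (1/2 : ℂ) • (Hᴴ * Gᴴ)) * (Θ⁻¹ * Θ)) := by
          rw [Matrix.mul_smul, Matrix.smul_mul]
          simp only [Matrix.mul_assoc]
        rw [e1, hΘinv', Matrix.mul_one, Matrix.mul_sub, Matrix.mul_smul]
      have rhs : Θ * M * Θ = Complex.I • (F * Θ - (1/2 : ℂ) • (G * H * Θ)) := by
        rw [hΘM, Matrix.smul_mul, Matrix.sub_mul, Matrix.smul_mul]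
      have hGHΘ : G * H * Θ = -(G * (Jmat m * Gᴴ)) := by
        rw [Matrix.mul_assoc, hHΘ]
        simp [Matrix.mul_assoc]
      have hΘHG2 : Θ * (Hᴴ * Gᴴ) = -(G * (Jmat m * Gᴴ)) := by
        rw [← Matrix.mul_assoc, hΘHG]
        simp [Matrix.mul_assoc]
      have hsum : F * Θ + Θ * Fᴴ = -(G * Jmat m * Gᴴ) :=
        eq_neg_of_add_eq_zero_left hricc
      have hFΘ : F * Θ = -(G * (Jmat m * Gᴴ)) - Θ * Fᴴ := by
        rw [show G * (Jmat m * Gᴴ) = G * Jmat m * Gᴴ from (Matrix.mul_assoc _ _ _).symm, ← hsum]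
        abel
      have key : Θ * Mᴴ * Θ = Θ * M * Θ := by
        rw [lhs, rhs, hGHΘ, hΘHG2, hFΘ]
        module
      have cancel : ∀ X : Matrix (Fin n ⊕ Fin n) (Fin n ⊕ Fin n) ℂ,
          Θ⁻¹ * (Θ * X * Θ) * Θ⁻¹ = X := by
        intro X
        calc Θ⁻¹ * (Θ * X * Θ) * Θ⁻¹ = (Θ⁻¹ * Θ) * X * (Θ * Θ⁻¹) := by
              simp only [Matrix.mul_assoc]
          _ = X := by rw [hΘinv, hΘinv', Matrix.one_mul, Matrix.mul_one]
      have : Mᴴ = M := by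
        rw [← cancel Mᴴ, key, cancel]
      exact this
    -- M has Δ-form
    have hsconjΘ : sconj Θ = -Θ := by
      rw [hΘ, Matrix.mul_assoc, sconj_mul, sconj_mul, sconj_Jmat, sconj_conjTranspose]
      rw [hTdef, sconj_deltaM, ← hTdef]
      simp [Matrix.mul_assoc]
    have hsconjΘinv : sconj Θ⁻¹ = -Θ⁻¹ := by
      have h5 : sconj Θ * sconj Θ⁻¹ = 1 := by rw [← sconj_mul, hΘinv, sconj_one]
      rw [hsconjΘ] at h5
      have h4 : Θ * -(sconj Θ⁻¹) = 1 := by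
        rw [Matrix.mul_neg, ← Matrix.neg_mul]
        exact h5
      have h6 := Matrix.inv_eq_right_inv h4
      rw [eq_comm, neg_eq_iff_eq_neg]
      exact h6
    have hsconjM : sconj M = M := by
      rw [hMdef, sconj_smul, sconj_mul, hsconjΘinv, sconj_sub, sconj_smul, sconj_mul]
      rw [hFdef, hGdef, hHdef, sconj_deltaM, sconj_deltaM, sconj_deltaM]
      rw [← hFdef, ← hGdef, ← hHdef, Complex.conj_I]
      simp [Matrix.neg_mul, map_ofNat]
    obtain ⟨M₁, M₂, hM12⟩ := exists_deltaM_of_sconj M hsconjM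
    refine ⟨T₁, T₂, M₁, M₂, H₁, H₂, Θ, hT, ?_, hΘ, ?_, ?_, rfl, hK⟩
    · rw [← hM12]; exact hMherm
    · rw [← hM12]
      exact hFeq
    · exact hG
end

section
/- Let F ∈ ℂ^{n×n}, G ∈ ℂ^{n×m}, H ∈ ℂ^{m×n}, and suppose there exists a Hermitian positive definite matrix Θ ∈ ℂ^{n×n} such that FΘ + ΘF† + GG† = 0 and G = −ΘH†. Define Γ(s) := H(sI − F)^{−1}G + I. Then for every s ∈ ℂ such that both sI − F and −conj(s)I − F are invertible, Γ(−conj(s))†Γ(s) = I and Γ(s)Γ(−conj(s))† = I. In particular, for every real ω such that iωI − F is invertible, Γ(iω)†Γ(iω) = I and Γ(iω)Γ(iω)† = I. -/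
open Matrix ComplexOrder

/-- if `(F, G, H, I)` satisfies the annihilation-operator physical
realizability equations `FΘ + ΘF† + GG† = 0` and `G = −ΘH†` for some Hermitian positive
definite `Θ`, then its transfer function `Γ(s) = H(sI − F)⁻¹G + I` is all-pass wherever it
is defined: `Γ(−conj(s))†Γ(s) = I` and `Γ(s)Γ(−conj(s))† = I`; in particular
`Γ(iω)†Γ(iω) = I` and `Γ(iω)Γ(iω)† = I` for every real `ω` where `iωI − F` is invertible. -/
theorem annihilation_transfer_lossless
    (n m : ℕ)
    (F : Matrix (Fin n) (Fin n) ℂ)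
    (G : Matrix (Fin n) (Fin m) ℂ)
    (H : Matrix (Fin m) (Fin n) ℂ)
    (Θ : Matrix (Fin n) (Fin n) ℂ)
    (hΘ : Θ.PosDef)
    (hRic : F * Θ + Θ * Fᴴ + G * Gᴴ = 0)
    (hG : G = -(Θ * Hᴴ)) :
    (∀ s : ℂ,
      IsUnit (s • (1 : Matrix (Fin n) (Fin n) ℂ) - F) →
      IsUnit ((-(starRingEnd ℂ) s) • (1 : Matrix (Fin n) (Fin n) ℂ) - F) →
      (H * ((-(starRingEnd ℂ) s) • (1 : Matrix (Fin n) (Fin n) ℂ) - F)⁻¹ * G + 1)ᴴ *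
        (H * (s • (1 : Matrix (Fin n) (Fin n) ℂ) - F)⁻¹ * G + 1) = 1 ∧
      (H * (s • (1 : Matrix (Fin n) (Fin n) ℂ) - F)⁻¹ * G + 1) *
        (H * ((-(starRingEnd ℂ) s) • (1 : Matrix (Fin n) (Fin n) ℂ) - F)⁻¹ * G + 1)ᴴ = 1) ∧
    (∀ ω : ℝ,
      IsUnit ((Complex.I * (ω : ℂ)) • (1 : Matrix (Fin n) (Fin n) ℂ) - F) →
      (H * ((Complex.I * (ω : ℂ)) • (1 : Matrix (Fin n) (Fin n) ℂ) - F)⁻¹ * G + 1)ᴴ *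
        (H * ((Complex.I * (ω : ℂ)) • (1 : Matrix (Fin n) (Fin n) ℂ) - F)⁻¹ * G + 1) = 1 ∧
      (H * ((Complex.I * (ω : ℂ)) • (1 : Matrix (Fin n) (Fin n) ℂ) - F)⁻¹ * G + 1) *
        (H * ((Complex.I * (ω : ℂ)) • (1 : Matrix (Fin n) (Fin n) ℂ) - F)⁻¹ * G + 1)ᴴ = 1) := by
  have hΘdet : IsUnit Θ.det := (Matrix.isUnit_iff_isUnit_det Θ).mp hΘ.isUnit
  have hTT' : Θ * Θ⁻¹ = 1 := Matrix.mul_nonsing_inv Θ hΘdet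
  have hT'T : Θ⁻¹ * Θ = 1 := Matrix.nonsing_inv_mul Θ hΘdet
  have hΘH : Θᴴ = Θ := hΘ.1
  -- main part
  have main : ∀ s : ℂ,
      IsUnit (s • (1 : Matrix (Fin n) (Fin n) ℂ) - F) →
      IsUnit ((-(starRingEnd ℂ) s) • (1 : Matrix (Fin n) (Fin n) ℂ) - F) →
      (H * ((-(starRingEnd ℂ) s) • (1 : Matrix (Fin n) (Fin n) ℂ) - F)⁻¹ * G + 1)ᴴ *
        (H * (s • (1 : Matrix (Fin n) (Fin n) ℂ) - F)⁻¹ * G + 1) = 1 ∧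
      (H * (s • (1 : Matrix (Fin n) (Fin n) ℂ) - F)⁻¹ * G + 1) *
        (H * ((-(starRingEnd ℂ) s) • (1 : Matrix (Fin n) (Fin n) ℂ) - F)⁻¹ * G + 1)ᴴ = 1 := by
    intro s hN hX
    set N : Matrix (Fin n) (Fin n) ℂ := s • (1 : Matrix (Fin n) (Fin n) ℂ) - F with hNdef
    set X : Matrix (Fin n) (Fin n) ℂ :=
      (-(starRingEnd ℂ) s) • (1 : Matrix (Fin n) (Fin n) ℂ) - F with hXdef
    have hXH : Xᴴ = (-s) • (1 : Matrix (Fin n) (Fin n) ℂ) - Fᴴ := by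
      simp [hXdef, Matrix.conjTranspose_sub, Matrix.conjTranspose_smul]
    set M : Matrix (Fin n) (Fin n) ℂ := (-s) • (1 : Matrix (Fin n) (Fin n) ℂ) - Fᴴ with hMdef
    have hMunit : IsUnit M := by
      rw [← hXH]
      rw [Matrix.isUnit_iff_isUnit_det] at hX ⊢
      rw [Matrix.det_conjTranspose]
      exact hX.star
    have hXinv : X⁻¹ᴴ = M⁻¹ := by rw [Matrix.conjTranspose_nonsing_inv, hXH]
    have hNdet : IsUnit N.det := (Matrix.isUnit_iff_isUnit_det N).mp hN
    have hMdet : IsUnit M.det := (Matrix.isUnit_iff_isUnit_det M).mp hMunit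
    have hNNi : N * N⁻¹ = 1 := Matrix.mul_nonsing_inv N hNdet
    have hNiN : N⁻¹ * N = 1 := Matrix.nonsing_inv_mul N hNdet
    have hMMi : M * M⁻¹ = 1 := Matrix.mul_nonsing_inv M hMdet
    have hMiM : M⁻¹ * M = 1 := Matrix.nonsing_inv_mul M hMdet
    -- basic relations
    have hG' : Gᴴ = -(H * Θ) := by
      rw [hG]; simp [Matrix.conjTranspose_mul, hΘH]
    have hgp : Gᴴ * Θ⁻¹ = -H := by
      rw [hG', Matrix.neg_mul, Matrix.mul_assoc, hTT', Matrix.mul_one]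
    have hpg : Θ⁻¹ * G = -Hᴴ := by
      rw [hG, Matrix.mul_neg, ← Matrix.mul_assoc, hT'T, Matrix.one_mul]
    have hht : H * Θ = -Gᴴ := by rw [hG', neg_neg]
    have hth : Θ * Hᴴ = -G := by rw [hG, neg_neg]
    -- Riccati consequences
    have h1 : G * Gᴴ = -(F * Θ) - Θ * Fᴴ := by
      rw [sub_eq_add_neg, ← neg_add]
      exact eq_neg_of_add_eq_zero_right hRic
    have hGG : G * Gᴴ = N * Θ + Θ * M := by
      rw [h1, hNdef, hMdef]
      rw [Matrix.sub_mul, Matrix.mul_sub, smul_mul_assoc, mul_smul_comm,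
        Matrix.one_mul, Matrix.mul_one, neg_smul]
      abel
    have hGG2 : Θ * (Hᴴ * H) * Θ = N * Θ + Θ * M := by
      rw [← hGG, hG]
      simp [Matrix.conjTranspose_mul, hΘH, Matrix.mul_assoc]
    have hhh : Hᴴ * H = Θ⁻¹ * N + M * Θ⁻¹ := by
      have e : Θ⁻¹ * (Θ * (Hᴴ * H) * Θ) * Θ⁻¹ = Hᴴ * H := by
        calc Θ⁻¹ * (Θ * (Hᴴ * H) * Θ) * Θ⁻¹
            = (Θ⁻¹ * Θ) * ((Hᴴ * H) * (Θ * Θ⁻¹)) := by noncomm_ring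
          _ = Hᴴ * H := by rw [hT'T, hTT', Matrix.one_mul, Matrix.mul_one]
      rw [← e, hGG2]
      calc Θ⁻¹ * (N * Θ + Θ * M) * Θ⁻¹
          = Θ⁻¹ * N * (Θ * Θ⁻¹) + (Θ⁻¹ * Θ) * (M * Θ⁻¹) := by noncomm_ring
        _ = Θ⁻¹ * N + M * Θ⁻¹ := by rw [hTT', hT'T, Matrix.mul_one, Matrix.one_mul]
    -- conjugate transpose of Γ(-conj s)
    have hΓH : (H * X⁻¹ * G + 1)ᴴ = Gᴴ * M⁻¹ * Hᴴ + 1 := by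
      rw [Matrix.conjTranspose_add, Matrix.conjTranspose_one,
        Matrix.conjTranspose_mul, Matrix.conjTranspose_mul, hXinv, Matrix.mul_assoc]
    have key : (Gᴴ * M⁻¹ * Hᴴ) * (H * N⁻¹ * G)
        = -(Gᴴ * M⁻¹ * Hᴴ) - H * N⁻¹ * G := by
      calc (Gᴴ * M⁻¹ * Hᴴ) * (H * N⁻¹ * G)
          = Gᴴ * M⁻¹ * (Hᴴ * H) * (N⁻¹ * G) := by simp only [Matrix.mul_assoc]
        _ = Gᴴ * M⁻¹ * (Θ⁻¹ * N + M * Θ⁻¹) * (N⁻¹ * G) := by rw [hhh]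
        _ = Gᴴ * M⁻¹ * (Θ⁻¹ * N) * (N⁻¹ * G) + Gᴴ * M⁻¹ * (M * Θ⁻¹) * (N⁻¹ * G) := by
            rw [Matrix.mul_add, Matrix.add_mul]
        _ = Gᴴ * (M⁻¹ * (Θ⁻¹ * (N * N⁻¹ * G))) + Gᴴ * (M⁻¹ * M * (Θ⁻¹ * (N⁻¹ * G))) := by
            simp only [Matrix.mul_assoc]
        _ = Gᴴ * (M⁻¹ * (Θ⁻¹ * G)) + Gᴴ * Θ⁻¹ * (N⁻¹ * G) := by
            rw [hNNi, hMiM, Matrix.one_mul, Matrix.one_mul]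
            simp only [Matrix.mul_assoc]
        _ = -(Gᴴ * M⁻¹ * Hᴴ) - H * N⁻¹ * G := by
            rw [hpg, hgp]
            simp only [Matrix.mul_neg, Matrix.neg_mul, sub_eq_add_neg, Matrix.mul_assoc]
    have key2 : (H * N⁻¹ * G) * (Gᴴ * M⁻¹ * Hᴴ)
        = -(Gᴴ * M⁻¹ * Hᴴ) - H * N⁻¹ * G := by
      calc (H * N⁻¹ * G) * (Gᴴ * M⁻¹ * Hᴴ)
          = H * N⁻¹ * (G * Gᴴ) * (M⁻¹ * Hᴴ) := by simp only [Matrix.mul_assoc]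
        _ = H * N⁻¹ * (N * Θ + Θ * M) * (M⁻¹ * Hᴴ) := by rw [hGG]
        _ = H * N⁻¹ * (N * Θ) * (M⁻¹ * Hᴴ) + H * N⁻¹ * (Θ * M) * (M⁻¹ * Hᴴ) := by
            rw [Matrix.mul_add, Matrix.add_mul]
        _ = H * (N⁻¹ * N * (Θ * (M⁻¹ * Hᴴ))) + H * (N⁻¹ * (Θ * (M * M⁻¹ * Hᴴ))) := by
            simp only [Matrix.mul_assoc]
        _ = H * Θ * (M⁻¹ * Hᴴ) + H * (N⁻¹ * (Θ * Hᴴ)) := by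
            rw [hNiN, hMMi, Matrix.one_mul, Matrix.one_mul]
            simp only [Matrix.mul_assoc]
        _ = -(Gᴴ * M⁻¹ * Hᴴ) - H * N⁻¹ * G := by
            rw [hht, hth]
            simp only [Matrix.mul_neg, Matrix.neg_mul, sub_eq_add_neg, Matrix.mul_assoc]
    constructor
    · rw [hΓH]
      calc (Gᴴ * M⁻¹ * Hᴴ + 1) * (H * N⁻¹ * G + 1)
          = (Gᴴ * M⁻¹ * Hᴴ) * (H * N⁻¹ * G) + Gᴴ * M⁻¹ * Hᴴ + (H * N⁻¹ * G + 1) := by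
            rw [Matrix.add_mul, Matrix.mul_add, Matrix.mul_one, Matrix.one_mul]
        _ = 1 := by rw [key]; all_goals abel
    · rw [hΓH]
      calc (H * N⁻¹ * G + 1) * (Gᴴ * M⁻¹ * Hᴴ + 1)
          = (H * N⁻¹ * G) * (Gᴴ * M⁻¹ * Hᴴ) + H * N⁻¹ * G + (Gᴴ * M⁻¹ * Hᴴ + 1) := by
            rw [Matrix.add_mul, Matrix.mul_add, Matrix.mul_one, Matrix.one_mul]
        _ = 1 := by rw [key2]; all_goals abel
  refine ⟨main, ?_⟩
  intro ω hω
  have hs : -(starRingEnd ℂ) (Complex.I * (ω : ℂ)) = Complex.I * (ω : ℂ) := by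
    simp [Complex.conj_I]
  have := main (Complex.I * (ω : ℂ)) hω (by rw [hs]; exact hω)
  rw [hs] at this
  exact this
end

section
/- Let F_c ∈ ℂ^{n_c×n_c}, H_{c1}, H_{c2} ∈ ℂ^{m×n_c}, G_{cy1}, G_{cy2} ∈ ℂ^{n_c×p}, and let Θ ∈ ℂ^{n_c×n_c} be Hermitian. Then there exist matrices G_{cw1b}, G_{cw2b} ∈ ℂ^{n_c×n_c} such that F_cΘ + ΘF_c† − Θ(H_{c2}†H_{c2} − H_{c1}†H_{c1})Θ + G_{cy1}G_{cy1}† − G_{cy2}G_{cy2}† + G_{cw1b}G_{cw1b}† − G_{cw2b}G_{cw2b}† = 0. That is, for any choice of controller dynamics matrices (F_c, G_{cy}, H_c) and any Hermitian commutation matrix Θ, the physical realizability Riccati equation can always be satisfied by adding suitable controller noise input matrices. -/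
open Matrix

lemma hermitian_eq_diff_sq {n : ℕ} (M : Matrix (Fin n) (Fin n) ℂ)
    (hM : M.IsHermitian) :
    ∃ A B : Matrix (Fin n) (Fin n) ℂ, A * Aᴴ - B * Bᴴ = M := by
  set V : Matrix (Fin n) (Fin n) ℂ := (hM.eigenvectorUnitary : Matrix (Fin n) (Fin n) ℂ)
  set lam := hM.eigenvalues
  refine ⟨V * diagonal (fun i => (Real.sqrt (max (lam i) 0) : ℂ)),
          V * diagonal (fun i => (Real.sqrt (max (-lam i) 0) : ℂ)), ?_⟩
  have hV : V * Vᴴ = 1 := by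
    simpa [V, star_eq_conjTranspose] using
      (Matrix.mem_unitaryGroup_iff).mp hM.eigenvectorUnitary.2
  have key : ∀ f : Fin n → ℝ,
      (V * diagonal (fun i => (Real.sqrt (max (f i) 0) : ℂ))) *
      (V * diagonal (fun i => (Real.sqrt (max (f i) 0) : ℂ)))ᴴ
      = V * diagonal (fun i => ((max (f i) 0 : ℝ) : ℂ)) * Vᴴ := by
    intro f
    rw [conjTranspose_mul, diagonal_conjTranspose]
    have : diagonal (fun i => (Real.sqrt (max (f i) 0) : ℂ)) *
        diagonal (star fun i => (Real.sqrt (max (f i) 0) : ℂ))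
        = diagonal (fun i => ((max (f i) 0 : ℝ) : ℂ)) := by
      rw [diagonal_mul_diagonal]
      refine congrArg diagonal (funext fun i => ?_)
      simp only [Pi.star_apply, Complex.star_def, Complex.conj_ofReal]
      rw [← Complex.ofReal_mul, Real.mul_self_sqrt (le_max_right _ _)]
    rw [mul_assoc, mul_assoc, ← mul_assoc (diagonal _), this]
  rw [key lam, key (fun i => -lam i)]
  rw [← sub_mul, ← mul_sub, diagonal_sub]
  have : (fun i => ((max (lam i) 0 : ℝ) : ℂ) - ((max (-lam i) 0 : ℝ) : ℂ))
      = fun i => (lam i : ℂ) := by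
    funext i
    rw [← Complex.ofReal_sub]
    congr 1
    rcases le_total (lam i) 0 with h | h
    · rw [max_eq_right h, max_eq_left (by linarith)]; ring
    · rw [max_eq_left h, max_eq_right (by linarith)]; ring
  rw [this]
  exact hM.spectral_theorem.symm

/-- for any controller dynamics matrices `(F_c, G_cy, H_c)` and any Hermitian
commutation matrix `Θ`, the physical realizability Riccati equation can always be satisfied
by adding suitable controller noise input matrices `G_{cw1b}, G_{cw2b}`. -/
theorem controller_noises_make_physically_realizable
    (nc m p : ℕ)
    (Fc : Matrix (Fin nc) (Fin nc) ℂ)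
    (Hc1 Hc2 : Matrix (Fin m) (Fin nc) ℂ)
    (Gcy1 Gcy2 : Matrix (Fin nc) (Fin p) ℂ)
    (Θ : Matrix (Fin nc) (Fin nc) ℂ)
    (hΘ : Θ.IsHermitian) :
    ∃ Gcw1b Gcw2b : Matrix (Fin nc) (Fin nc) ℂ,
      Fc * Θ + Θ * Fcᴴ - Θ * (Hc2ᴴ * Hc2 - Hc1ᴴ * Hc1) * Θ +
        Gcy1 * Gcy1ᴴ - Gcy2 * Gcy2ᴴ +
        Gcw1b * Gcw1bᴴ - Gcw2b * Gcw2bᴴ = 0 := by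
  set M : Matrix (Fin nc) (Fin nc) ℂ :=
    -(Fc * Θ + Θ * Fcᴴ - Θ * (Hc2ᴴ * Hc2 - Hc1ᴴ * Hc1) * Θ +
      Gcy1 * Gcy1ᴴ - Gcy2 * Gcy2ᴴ) with hMdef
  have hM : M.IsHermitian := by
    unfold Matrix.IsHermitian
    simp only [hMdef, conjTranspose_neg, conjTranspose_add, conjTranspose_sub,
      conjTranspose_mul, conjTranspose_conjTranspose, hΘ.eq]
    noncomm_ring
  obtain ⟨A, B, hAB⟩ := hermitian_eq_diff_sq M hM
  refine ⟨A, B, ?_⟩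
  have : A * Aᴴ - B * Bᴴ = M := hAB
  rw [hMdef] at this
  linear_combination (norm := noncomm_ring) this
end
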